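/- Let M be a positive integer, let k ≤ M, and let t_1 ≥ t_2 ≥ ⋯ ≥ t_k ≥ 0 be a sub-probability vector with total mass Σ_{i=1}^k t_i = 1 − T, where T ≥ k/M. Then every M-type probability distribution p supported on {1, …, k} satisfies Σ_{i=1}^k |p_i − t_i| ≥ T, and there exists an M-type probability distribution p supported on {1, …, k} with Σ_{i=1}^k |p_i − t_i| = T. -/

import Mathlib

/-- An `M`-type distribution: every entry is `c_i / M` for a nonnegative integer
`c_i ≤ M`, and the entries sum to one. -/
def IsMType (M : ℕ) (p : ℕ → ℝ) : Prop :=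
  HasSum p 1 ∧ ∃ c : ℕ → ℕ, (∀ i, c i ≤ M) ∧ ∀ i, p i = (c i : ℝ) / M

/-- for an ordered sub-probability vector `t_1 ≥ ⋯ ≥ t_k ≥ 0` with total
mass `1 − T`, `k ≤ M` and `T ≥ k/M`: every `M`-type probability distribution supported
on the first `k` indices has variational distance at least `T` from `t`, and this
distance `T` is achieved by some such distribution. -/
theorem stmt5 (M k : ℕ) (hM : 0 < M) (hk : 0 < k) (hkM : k ≤ M)
    (t : ℕ → ℝ) (T : ℝ) (hT : (k : ℝ) / M ≤ T) (hT1 : T ≤ 1)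
    (hnn : ∀ i, i < k → 0 ≤ t i)
    (hord : ∀ i, i + 1 < k → t (i + 1) ≤ t i)
    (hsum : ∑ i ∈ Finset.range k, t i = 1 - T) :
    (∀ p : ℕ → ℝ, IsMType M p → (∀ i, k ≤ i → p i = 0) →
      T ≤ ∑ i ∈ Finset.range k, |p i - t i|) ∧
    ∃ p : ℕ → ℝ, IsMType M p ∧ (∀ i, k ≤ i → p i = 0) ∧
      (∑ i ∈ Finset.range k, |p i - t i|) = T := by
  have hM0 : (0:ℝ) < (M:ℝ) := by exact_mod_cast hM
  constructor
  · rintro p ⟨hps, _⟩ hsupp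
    have hps' : ∑ i ∈ Finset.range k, p i = 1 := by
      have h := hasSum_sum_of_ne_finset_zero (L := SummationFilter.unconditional ℕ) (s := Finset.range k) (f := p)
        (fun b hb => hsupp b (by simpa using hb))
      exact h.unique hps
    calc T = ∑ i ∈ Finset.range k, (p i - t i) := by
            rw [Finset.sum_sub_distrib, hps', hsum]; ring
      _ ≤ ∑ i ∈ Finset.range k, |p i - t i| :=
          Finset.sum_le_sum fun i _ => le_abs_self _
  · set S : ℕ := ∑ i ∈ Finset.range k, ⌈(M:ℝ) * t i⌉₊ with hS
    have hSM : S ≤ M := by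
      have h1 : (S:ℝ) < ∑ i ∈ Finset.range k, ((M:ℝ) * t i + 1) := by
        rw [hS]
        push_cast
        refine Finset.sum_lt_sum_of_nonempty (by simp; omega) fun i hi => ?_
        exact Nat.ceil_lt_add_one (mul_nonneg hM0.le (hnn i (Finset.mem_range.mp hi)))
      have h2 : ∑ i ∈ Finset.range k, ((M:ℝ) * t i + 1) = (M:ℝ) * (1 - T) + k := by
        rw [Finset.sum_add_distrib, ← Finset.mul_sum, hsum]
        simp
      have h3 : (k:ℝ) ≤ (M:ℝ) * T := by
        rw [div_le_iff₀ hM0] at hT; linarith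
      have : (S:ℝ) < (M:ℝ) := by rw [h2] at h1; linarith
      exact_mod_cast this.le
    set c : ℕ → ℕ := fun i =>
      (if i = 0 then M - S else 0) + (if i < k then ⌈(M:ℝ) * t i⌉₊ else 0) with hc
    have hcsum : ∑ i ∈ Finset.range k, c i = M := by
      rw [hc]
      rw [Finset.sum_add_distrib]
      rw [Finset.sum_ite_eq' (Finset.range k) 0 (fun _ => M - S)]
      have h0 : (0 : ℕ) ∈ Finset.range k := Finset.mem_range.mpr hk
      rw [if_pos h0]
      have : ∑ i ∈ Finset.range k, (if i < k then ⌈(M:ℝ) * t i⌉₊ else 0) = S := by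
        rw [hS]
        exact Finset.sum_congr rfl fun i hi => if_pos (Finset.mem_range.mp hi)
      rw [this]
      exact Nat.sub_add_cancel hSM
    have hcle : ∀ i, c i ≤ M := by
      intro i
      by_cases hik : i < k
      · calc c i ≤ ∑ j ∈ Finset.range k, c j :=
              Finset.single_le_sum (fun j _ => Nat.zero_le _) (Finset.mem_range.mpr hik)
          _ = M := hcsum
      · have hi0 : i ≠ 0 := by omega
        simp [hc, hi0, hik]
    set p : ℕ → ℝ := fun i => (c i : ℝ) / M with hp
    have hsupp : ∀ i, k ≤ i → p i = 0 := by
      intro i hi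
      have hi0 : i ≠ 0 := by omega
      have hik : ¬ i < k := by omega
      simp [hp, hc, hi0, hik]
    have hpsum : ∑ i ∈ Finset.range k, p i = 1 := by
      rw [hp]
      rw [← Finset.sum_div]
      rw [show ∑ i ∈ Finset.range k, (c i : ℝ) = ((∑ i ∈ Finset.range k, c i : ℕ) : ℝ) by
        push_cast; rfl]
      rw [hcsum]
      exact div_self hM0.ne'
    have hge : ∀ i, i < k → t i ≤ p i := by
      intro i hi
      have h1 : ⌈(M:ℝ) * t i⌉₊ ≤ c i := by simp [hc, hi]
      have h2 : (M:ℝ) * t i ≤ (c i : ℝ) :=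
        le_trans (Nat.le_ceil _) (by exact_mod_cast h1)
      rw [hp]
      rw [le_div_iff₀ hM0]
      linarith
    refine ⟨p, ⟨?_, c, hcle, fun i => rfl⟩, hsupp, ?_⟩
    · have h := hasSum_sum_of_ne_finset_zero (L := SummationFilter.unconditional ℕ) (s := Finset.range k) (f := p)
        (fun b hb => hsupp b (by simpa using hb))
      rwa [hpsum] at h
    · calc ∑ i ∈ Finset.range k, |p i - t i|
          = ∑ i ∈ Finset.range k, (p i - t i) :=
            Finset.sum_congr rfl fun i hi =>
              abs_of_nonneg (sub_nonneg.mpr (hge i (Finset.mem_range.mp hi)))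
        _ = T := by rw [Finset.sum_sub_distrib, hpsum, hsum]; ring
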